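/- Let u : ℝ² → ℝ be continuously differentiable and define A(x,y,z) = 2·log|z| + z·u(x,y). Then for all x, y ∈ ℝ and all z ≠ 0, the Rashevsky identity A''(x,y,z)·(u_x(x,y)·z²/2) + z·A'_y + A'_x − A_y = 0 holds; that is, the geodesic equation of the corresponding two-dimensional Finsler metric L = 2p·log|q/p| + q·u(x,y) is 2y'' = u_x·y'², whose right-hand side is a polynomial of degree at most three in y'. -/

import Mathlib

noncomputable section

/-- Partial derivative in the third variable `z`. -/
def pZ (A : ℝ → ℝ → ℝ → ℝ) : ℝ → ℝ → ℝ → ℝ := fun x y z => deriv (fun t => A x y t) z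

/-- Partial derivative in the first variable `x`. -/
def pX (A : ℝ → ℝ → ℝ → ℝ) : ℝ → ℝ → ℝ → ℝ := fun x y z => deriv (fun t => A t y z) x

/-- Partial derivative in the second variable `y`. -/
def pY (A : ℝ → ℝ → ℝ → ℝ) : ℝ → ℝ → ℝ → ℝ := fun x y z => deriv (fun t => A x t z) y

/-- The associated fundamental function `A(x,y,z) = 2·log|z| + z·u(x,y)`. -/
def Alog (u : ℝ → ℝ → ℝ) : ℝ → ℝ → ℝ → ℝ :=
  fun x y z => 2 * Real.log |z| + z * u x y

lemma pZ_Alog (u : ℝ → ℝ → ℝ) (x y z : ℝ) (hz : z ≠ 0) :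
    pZ (Alog u) x y z = 2 * z⁻¹ + u x y := by
  have h : (fun t => Alog u x y t) = fun t => 2 * Real.log t + t * u x y := by
    funext t; simp [Alog, Real.log_abs]
  have hd : HasDerivAt (fun t => 2 * Real.log t + t * u x y)
      (2 * z⁻¹ + 1 * u x y) z :=
    ((Real.hasDerivAt_log hz).const_mul 2).add ((hasDerivAt_id z).mul_const (u x y))
  simp only [pZ, h]
  rw [hd.deriv]; ring

/-- for `A(x,y,z) = 2 log|z| + z·u(x,y)` and `z ≠ 0`, the Rashevsky identity
`A''·(uₓ·z²/2) + z·A'_y + A'_x − A_y = 0` holds; the geodesic equation is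
`2y'' = uₓ·y'²`, whose right-hand side is a polynomial of degree ≤ 3 in `y'`. -/
theorem stmt_8 (u : ℝ → ℝ → ℝ) (hu : ContDiff ℝ 1 (fun v : ℝ × ℝ => u v.1 v.2)) :
    ∀ x y : ℝ, ∀ z : ℝ, z ≠ 0 →
      pZ (pZ (Alog u)) x y z * (deriv (fun w => u w y) x * z ^ 2 / 2)
        + z * pY (pZ (Alog u)) x y z + pX (pZ (Alog u)) x y z - pY (Alog u) x y z = 0 := by
  intro x y z hz
  have du : Differentiable ℝ (fun v : ℝ × ℝ => u v.1 v.2) := hu.differentiable one_ne_zero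
  have duy : DifferentiableAt ℝ (fun t => u x t) y := by
    have := (du (x, y)).comp y ((differentiableAt_const x).prodMk differentiableAt_id)
    exact this
  -- pZ (pZ (Alog u)) x y z = -2 / z^2
  have h1 : pZ (pZ (Alog u)) x y z = 2 * (-(z ^ 2)⁻¹) := by
    have hev : (fun t => pZ (Alog u) x y t) =ᶠ[nhds z] fun t => 2 * t⁻¹ + u x y := by
      filter_upwards [eventually_ne_nhds hz] with t ht
      exact pZ_Alog u x y t ht
    have hd : HasDerivAt (fun t => 2 * t⁻¹ + u x y) (2 * (-(z ^ 2)⁻¹) + 0) z :=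
      ((hasDerivAt_inv hz).const_mul 2).add (hasDerivAt_const z (u x y))
    simp only [pZ] at hev ⊢
    rw [hev.deriv_eq, hd.deriv, add_zero]
  -- pY (pZ (Alog u)) x y z = deriv (fun t => u x t) y
  have h2 : pY (pZ (Alog u)) x y z = deriv (fun t => u x t) y := by
    have hfun : (fun t => pZ (Alog u) x t z) = fun t => 2 * z⁻¹ + u x t := by
      funext t; exact pZ_Alog u x t z hz
    simp only [pY, hfun]
    rw [deriv_const_add]
  -- pX (pZ (Alog u)) x y z = deriv (fun w => u w y) x
  have h3 : pX (pZ (Alog u)) x y z = deriv (fun w => u w y) x := by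
    have hfun : (fun t => pZ (Alog u) t y z) = fun t => 2 * z⁻¹ + u t y := by
      funext t; exact pZ_Alog u t y z hz
    simp only [pX, hfun]
    rw [deriv_const_add]
  -- pY (Alog u) x y z = z * deriv (fun t => u x t) y
  have h4 : pY (Alog u) x y z = z * deriv (fun t => u x t) y := by
    simp only [pY, Alog]
    rw [deriv_const_add, deriv_const_mul _ duy]
  rw [h1, h2, h3, h4]
  field_simp
  ring
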